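/- Let P ⊆ ℝ² be a nonempty finite set and let a, b ∈ ℝ². Then max_{x ∈ P} Metric.infDist x (segment ℝ a b) = max ( max_{x ∈ P} Metric.infDist x (ray(a,b)), max_{x ∈ P} Metric.infDist x (ray(b,a)) ). In particular, a point of P furthest from one of the two rays is a point of P furthest from the segment. -/

import Mathlib

open Metric

noncomputable section

/-- The Euclidean plane. -/
abbrev Pt : Type := EuclideanSpace ℝ (Fin 2)

/-- The ray emanating from `a` through `b`. -/
def ray (a b : Pt) : Set Pt := {x : Pt | ∃ t : ℝ, 0 ≤ t ∧ x = a + t • (b - a)}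

lemma ray_nonempty (a b : Pt) : (ray a b).Nonempty :=
  ⟨a, 0, le_refl _, by simp⟩

lemma segment_subset_ray (a b : Pt) : segment ℝ a b ⊆ ray a b := by
  intro y hy
  rw [segment_eq_image'] at hy
  obtain ⟨t, ht, rfl⟩ := hy
  exact ⟨t, ht.1, rfl⟩

lemma le_infDist' {s : Set Pt} (hs : s.Nonempty) {x : Pt} {d : ℝ}
    (h : ∀ y ∈ s, d ≤ dist x y) : d ≤ infDist x s := by
  rw [infDist_eq_iInf]
  haveI := hs.to_subtype
  exact le_ciInf fun y => h y y.2

lemma dist_le_infDist_ray (a b x : Pt) (h : inner ℝ (x - a) (b - a) ≤ (0 : ℝ)) :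
    dist x a ≤ infDist x (ray a b) := by
  apply le_infDist' (ray_nonempty a b)
  rintro y ⟨t, ht, rfl⟩
  rw [dist_eq_norm, dist_eq_norm]
  have hexp : ‖x - (a + t • (b - a))‖ ^ 2
      = ‖x - a‖ ^ 2 - 2 * (t * inner ℝ (x - a) (b - a)) + t ^ 2 * ‖b - a‖ ^ 2 := by
    have : x - (a + t • (b - a)) = (x - a) - t • (b - a) := by abel
    rw [this, norm_sub_sq_real, real_inner_smul_right, norm_smul]
    simp only [mul_pow, Real.norm_eq_abs, sq_abs]
  nlinarith [norm_nonneg (x - (a + t • (b - a))), norm_nonneg (x - a),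
    mul_nonneg (mul_nonneg ht ht) (sq_nonneg ‖b - a‖),
    mul_nonpos_of_nonneg_of_nonpos ht h]

lemma proj_le_infDist_ray (a b x : Pt) (c : ℝ)
    (h : inner ℝ (x - a - c • (b - a)) (b - a) = (0 : ℝ)) :
    dist x (a + c • (b - a)) ≤ infDist x (ray a b) := by
  apply le_infDist' (ray_nonempty a b)
  rintro y ⟨t, ht, rfl⟩
  rw [dist_eq_norm, dist_eq_norm]
  have h1 : x - (a + t • (b - a)) = (x - a - c • (b - a)) - (t - c) • (b - a) := by
    rw [sub_smul]; abel
  have h2 : x - (a + c • (b - a)) = x - a - c • (b - a) := by abel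
  rw [h1, h2]
  have hexp : ‖(x - a - c • (b - a)) - (t - c) • (b - a)‖ ^ 2
      = ‖x - a - c • (b - a)‖ ^ 2 + (t - c) ^ 2 * ‖b - a‖ ^ 2 := by
    rw [norm_sub_sq_real, real_inner_smul_right, h, norm_smul]
    simp only [mul_pow, Real.norm_eq_abs, sq_abs]
    ring
  nlinarith [norm_nonneg ((x - a - c • (b - a)) - (t - c) • (b - a)),
    norm_nonneg (x - a - c • (b - a)), mul_nonneg (sq_nonneg (t - c)) (sq_nonneg ‖b - a‖)]

lemma infDist_segment_le_max (a b x : Pt) :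
    infDist x (segment ℝ a b) ≤ max (infDist x (ray a b)) (infDist x (ray b a)) := by
  by_cases hab : b = a
  · subst hab
    have h1 : ray b b = {b} := by
      ext y
      simp only [ray, Set.mem_setOf_eq, Set.mem_singleton_iff]
      constructor
      · rintro ⟨t, -, rfl⟩; simp
      · rintro rfl; exact ⟨0, le_refl _, by simp⟩
    simp [h1, segment_same]
  have hv : (b - a : Pt) ≠ 0 := sub_ne_zero.mpr hab
  have hv2 : (0 : ℝ) < ‖b - a‖ ^ 2 := pow_pos (norm_pos_iff.mpr hv) 2
  set c : ℝ := inner ℝ (x - a) (b - a) / ‖b - a‖ ^ 2 with hc_def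
  have hinner : inner ℝ (x - a) (b - a) = c * ‖b - a‖ ^ 2 := by
    rw [hc_def, div_mul_cancel₀ _ hv2.ne']
  rcases le_or_gt c 0 with hc | hc
  · have h0 : inner ℝ (x - a) (b - a) ≤ (0 : ℝ) := by
      rw [hinner]
      exact mul_nonpos_of_nonpos_of_nonneg hc (sq_nonneg _)
    calc infDist x (segment ℝ a b) ≤ dist x a :=
          infDist_le_dist_of_mem (left_mem_segment ℝ a b)
      _ ≤ infDist x (ray a b) := dist_le_infDist_ray a b x h0
      _ ≤ _ := le_max_left _ _
  rcases le_or_gt 1 c with hc1 | hc1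
  · have h0 : inner ℝ (x - b) (a - b) ≤ (0 : ℝ) := by
      have hxb : x - b = (x - a) - (b - a) := by abel
      have hab2 : a - b = -(b - a) := by abel
      rw [hxb, hab2, inner_neg_right, inner_sub_left, hinner, real_inner_self_eq_norm_sq]
      nlinarith
    calc infDist x (segment ℝ a b) ≤ dist x b :=
          infDist_le_dist_of_mem (right_mem_segment ℝ a b)
      _ ≤ infDist x (ray b a) := dist_le_infDist_ray b a x h0
      _ ≤ _ := le_max_right _ _
  · have hmem : a + c • (b - a) ∈ segment ℝ a b := by
      rw [segment_eq_image']
      exact ⟨c, ⟨hc.le, hc1.le⟩, rfl⟩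
    have hperp : inner ℝ (x - a - c • (b - a)) (b - a) = (0 : ℝ) := by
      rw [inner_sub_left, real_inner_smul_left, hinner, real_inner_self_eq_norm_sq]
      ring
    calc infDist x (segment ℝ a b) ≤ dist x (a + c • (b - a)) :=
          infDist_le_dist_of_mem hmem
      _ ≤ infDist x (ray a b) := proj_le_infDist_ray a b x c hperp
      _ ≤ _ := le_max_left _ _

lemma infDist_ray_le_segment (a b x : Pt) :
    infDist x (ray a b) ≤ infDist x (segment ℝ a b) :=
  infDist_le_infDist_of_subset (segment_subset_ray a b) ⟨a, left_mem_segment ℝ a b⟩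

/-- For a nonempty finite set `P`, the maximum distance from a point of
`P` to a segment equals the larger of the maximum distances to the two rays spanned by
the segment. -/
theorem max_infDist_segment_eq_max_rays (P : Finset Pt) (hP : P.Nonempty) (a b : Pt) :
    P.sup' hP (fun x => Metric.infDist x (segment ℝ a b)) =
      max (P.sup' hP (fun x => Metric.infDist x (ray a b)))
          (P.sup' hP (fun x => Metric.infDist x (ray b a))) := by
  apply le_antisymm
  · apply Finset.sup'_le
    intro x hx
    refine le_trans (infDist_segment_le_max a b x) (max_le_max ?_ ?_)
    · exact Finset.le_sup' (fun x => Metric.infDist x (ray a b)) hx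
    · exact Finset.le_sup' (fun x => Metric.infDist x (ray b a)) hx
  · apply max_le
    · apply Finset.sup'_le
      intro x hx
      exact le_trans (infDist_ray_le_segment a b x)
        (Finset.le_sup' (fun x => Metric.infDist x (segment ℝ a b)) hx)
    · apply Finset.sup'_le
      intro x hx
      have : infDist x (ray b a) ≤ infDist x (segment ℝ a b) := by
        rw [segment_symm]
        exact infDist_ray_le_segment b a x
      exact le_trans this
        (Finset.le_sup' (fun x => Metric.infDist x (segment ℝ a b)) hx)
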